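/- For all natural numbers x and y with x > 0 and y > 0, x divides y if and only if there exists a natural number z > 0 such that 2^y + z = z · 2^x + 1. -/
import Mathlib

lemma aux_arith1 (a b c : ℕ) (ha : 1 ≤ a) (hb : 1 ≤ b) (hc : c = a * b) :
    c - 1 - a * (b - 1) = a - 1 := by
  have h1 : a * (b - 1) = a * b - a := by rw [Nat.mul_sub, mul_one]
  have h2 : a ≤ a * b := Nat.le_mul_of_pos_right a hb
  omega

lemma aux_arith2 (p q z : ℕ) (hp : 1 ≤ p) (hq : 1 ≤ q) :
    q + z = z * p + 1 ↔ q - 1 = (p - 1) * z := by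
  have h1 : (p - 1) * z = p * z - z := by rw [Nat.sub_mul, one_mul]
  have h2 : z ≤ p * z := Nat.le_mul_of_pos_left z hp
  have h3 : z * p = p * z := mul_comm z p
  omega

lemma aux_dvd_of_mersenne_dvd (x y : ℕ) (hx : 0 < x)
    (h : 2 ^ x - 1 ∣ 2 ^ y - 1) : x ∣ y := by
  obtain ⟨q, r, hyx, hrx⟩ : ∃ q r, y = x * q + r ∧ r < x :=
    ⟨y / x, y % x, (Nat.div_add_mod y x).symm, Nat.mod_lt _ hx⟩
  have h1 : 2 ^ x - 1 ∣ 2 ^ (x * q) - 1 := by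
    simpa [pow_mul] using Nat.sub_dvd_pow_sub_pow (2 ^ x) 1 q
  have h2 : 2 ^ x - 1 ∣ 2 ^ r * (2 ^ (x * q) - 1) := h1.mul_left _
  have h3 : 2 ^ x - 1 ∣ 2 ^ y - 1 - 2 ^ r * (2 ^ (x * q) - 1) := Nat.dvd_sub h h2
  have he : 2 ^ y - 1 - 2 ^ r * (2 ^ (x * q) - 1) = 2 ^ r - 1 :=
    aux_arith1 (2 ^ r) (2 ^ (x * q)) (2 ^ y) Nat.one_le_two_pow Nat.one_le_two_pow
      (by rw [hyx, pow_add]; ring)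
  rw [he] at h3
  have h8 : (2:ℕ) ^ r < 2 ^ x := Nat.pow_lt_pow_right one_lt_two hrx
  have h9 : 1 ≤ (2:ℕ) ^ r := Nat.one_le_two_pow
  have hr0 : 2 ^ r - 1 = 0 := Nat.eq_zero_of_dvd_of_lt h3 (by omega)
  have : r = 0 := by
    by_contra hne
    have := Nat.one_lt_two_pow_iff.mpr hne
    omega
  exact ⟨q, by omega⟩

theorem dvd_iff_exists_pos_eq (x y : ℕ) (hx : 0 < x) (hy : 0 < y) :
    x ∣ y ↔ ∃ z : ℕ, 0 < z ∧ 2 ^ y + z = z * 2 ^ x + 1 := by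
  have hx1 : 1 ≤ 2 ^ x := Nat.one_le_two_pow
  have hy1 : 1 ≤ 2 ^ y := Nat.one_le_two_pow
  constructor
  · rintro ⟨k, rfl⟩
    have hdvd : 2 ^ x - 1 ∣ 2 ^ (x * k) - 1 := by
      simpa [pow_mul] using Nat.sub_dvd_pow_sub_pow (2 ^ x) 1 k
    obtain ⟨z, hz⟩ := hdvd
    have hy2 : 1 < 2 ^ (x * k) := Nat.one_lt_two_pow_iff.mpr (by positivity)
    refine ⟨z, ?_, (aux_arith2 (2 ^ x) (2 ^ (x * k)) z hx1 (by omega)).mpr hz⟩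
    rcases Nat.eq_zero_or_pos z with h0 | h0
    · rw [h0, mul_zero] at hz; omega
    · exact h0
  · rintro ⟨z, hz, heq⟩
    exact aux_dvd_of_mersenne_dvd x y hx
      ⟨z, (aux_arith2 (2 ^ x) (2 ^ y) z hx1 hy1).mp heq⟩
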